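/- Let i_1,...,i_N be a uniformly random permutation of {1,...,N}. Define r_ℓ for ℓ = 1,...,Q (with Q ≤ N) by: conditional on i_1,...,i_ℓ and r_1,...,r_{ℓ-1}, set r_ℓ = i_ℓ with probability 1 - (ℓ-1)/N and r_ℓ = i_{ℓ'} with probability 1/N for each ℓ' = 1,...,ℓ-1. Then (r_1,...,r_Q) has the same joint distribution as a sequence of Q i.i.d. indices drawn uniformly with replacement from {1,...,N}. -/

import Mathlib

open scoped Classical

namespace DataAllocAux

/-- Address function: the position in `Fin Q` accessed by the algorithm at step `ℓ`
when the auxiliary sample is `v`. -/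
def addr {N Q : ℕ} (ℓ : Fin Q) (v : Fin N) : Fin Q :=
  if h : (v : ℕ) < (ℓ : ℕ) then ⟨v, h.trans ℓ.isLt⟩ else ℓ

lemma addr_castSucc {N Q : ℕ} (ℓ : Fin Q) (v : Fin N) :
    addr (Fin.castSucc ℓ) v = Fin.castSucc (addr (N := N) ℓ v) := by
  unfold addr
  by_cases h : (v : ℕ) < (ℓ : ℕ)
  · rw [dif_pos (by simpa using h), dif_pos h]; rfl
  · rw [dif_neg (by simpa using h), dif_neg h]

lemma addr_last {N Q : ℕ} (v : Fin N) :
    addr (Fin.last Q) v =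
      if hlt : (v : ℕ) < Q then Fin.castSucc ⟨(v : ℕ), hlt⟩ else Fin.last Q := by
  unfold addr
  by_cases h : (v : ℕ) < Q
  · rw [dif_pos (by simpa using h), dif_pos h]; rfl
  · rw [dif_neg (by simpa using h), dif_neg h]

/-- Fibers of the "partial injection" version of the allocation map. -/
def TFib (N Q : ℕ) (h : Fin Q → Fin N) : Type :=
  {p : (Fin Q → Fin N) × (Fin Q → Fin N) //
    Function.Injective p.1 ∧ ∀ ℓ, p.1 (addr ℓ (p.2 ℓ)) = h ℓ}

noncomputable instance (N Q : ℕ) (h : Fin Q → Fin N) : Fintype (TFib N Q h) := by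
  unfold TFib; infer_instance

/-- One-step extension data. -/
def EFib (N Q : ℕ) (s₀ : Fin Q → Fin N) (y : Fin N) : Type :=
  {zx : Fin N × Fin N // zx.1 ∉ Set.range s₀ ∧
    (if hlt : (zx.2 : ℕ) < Q then s₀ ⟨(zx.2 : ℕ), hlt⟩ else zx.1) = y}

noncomputable instance (N Q : ℕ) (s₀ : Fin Q → Fin N) (y : Fin N) :
    Fintype (EFib N Q s₀ y) := by
  unfold EFib; infer_instance

def tfibEquiv (N Q : ℕ) (h : Fin (Q + 1) → Fin N) :
    TFib N (Q + 1) h ≃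
      Σ q : TFib N Q (h ∘ Fin.castSucc), EFib N Q q.1.1 (h (Fin.last Q)) where
  toFun p :=
    ⟨⟨(Fin.init p.1.1, Fin.init p.1.2), by
        constructor
        · exact fun a b hab => Fin.castSucc_injective Q (p.2.1 hab)
        · intro ℓ
          have := p.2.2 (Fin.castSucc ℓ)
          rwa [addr_castSucc] at this⟩,
      ⟨(p.1.1 (Fin.last Q), p.1.2 (Fin.last Q)), by
        constructor
        · rintro ⟨i, hi⟩
          exact absurd (p.2.1 hi) (Fin.ne_last_of_lt (Fin.castSucc_lt_last i))
        · have := p.2.2 (Fin.last Q)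
          rw [addr_last] at this
          by_cases hlt : ((p.1.2 (Fin.last Q) : ℕ)) < Q
          · rw [dif_pos hlt]; rw [dif_pos hlt] at this; exact this
          · rw [dif_neg hlt]; rw [dif_neg hlt] at this; exact this⟩⟩
  invFun q :=
    ⟨(Fin.snoc q.1.1.1 q.2.1.1, Fin.snoc q.1.1.2 q.2.1.2), by
      obtain ⟨⟨⟨s₀, f₀⟩, hinj, hc⟩, ⟨⟨z, x⟩, hz, hx⟩⟩ := q
      simp only at *
      constructor
      · intro a b hab
        induction a using Fin.lastCases with
        | last =>
          induction b using Fin.lastCases with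
          | last => rfl
          | cast b =>
            rw [Fin.snoc_last, Fin.snoc_castSucc] at hab
            exact absurd ⟨b, hab.symm⟩ hz
        | cast a =>
          induction b using Fin.lastCases with
          | last =>
            rw [Fin.snoc_last, Fin.snoc_castSucc] at hab
            exact absurd ⟨a, hab⟩ hz
          | cast b =>
            rw [Fin.snoc_castSucc, Fin.snoc_castSucc] at hab
            exact congrArg _ (hinj hab)
      · intro ℓ
        induction ℓ using Fin.lastCases with
        | last =>
          rw [Fin.snoc_last, addr_last]
          by_cases hlt : (x : ℕ) < Q
          · rw [dif_pos hlt, Fin.snoc_castSucc]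
            rw [dif_pos hlt] at hx
            exact hx
          · rw [dif_neg hlt, Fin.snoc_last]
            rw [dif_neg hlt] at hx
            exact hx
        | cast ℓ =>
          rw [Fin.snoc_castSucc, addr_castSucc, Fin.snoc_castSucc]
          exact hc ℓ⟩
  left_inv p := by
    apply Subtype.ext
    apply Prod.ext <;> simp [Fin.snoc_init_self]
  right_inv q := by
    obtain ⟨⟨⟨s₀, f₀⟩, hq⟩, ⟨⟨z, x⟩, hzx⟩⟩ := q
    apply Sigma.ext <;>
      simp [Fin.init_snoc, Fin.snoc_last, TFib, EFib, Subtype.heq_iff_coe_eq]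

lemma card_EFib {N Q : ℕ} (hQ : Q ≤ N) (s₀ : Fin Q → Fin N)
    (hinj : Function.Injective s₀) (y : Fin N) :
    Fintype.card (EFib N Q s₀ y) = N - Q := by
  by_cases hy : y ∈ Set.range s₀
  · obtain ⟨j, hj⟩ := hy
    have e : EFib N Q s₀ y ≃ {z : Fin N // z ∉ Set.range s₀} :=
      { toFun := fun p => ⟨p.1.1, p.2.1⟩
        invFun := fun z => ⟨(z.1, ⟨(j : ℕ), lt_of_lt_of_le j.isLt hQ⟩),
          z.2, by rw [dif_pos (j.isLt : ((j : ℕ) : ℕ) < Q)]; simpa using hj⟩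
        left_inv := fun p => by
          obtain ⟨⟨z, x⟩, hz, hx⟩ := p
          apply Subtype.ext
          simp only [Prod.mk.injEq]
          refine ⟨trivial, ?_⟩
          by_cases hlt : (x : ℕ) < Q
          · rw [dif_pos hlt] at hx
            have : (⟨(x : ℕ), hlt⟩ : Fin Q) = j := hinj (hx.trans hj.symm)
            have hv : (x : ℕ) = (j : ℕ) := congrArg Fin.val this
            exact Fin.ext hv.symm
          · rw [dif_neg hlt] at hx
            exact absurd (hx ▸ ⟨j, hj⟩) hz
        right_inv := fun z => rfl }
    rw [Fintype.card_congr e]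
    have h1 : Fintype.card {z : Fin N // z ∈ Set.range s₀} = Q := by
      rw [Fintype.card_congr (Equiv.ofInjective s₀ hinj).symm, Fintype.card_fin]
    rw [Fintype.card_subtype_compl, h1, Fintype.card_fin]
  · have e : EFib N Q s₀ y ≃ {x : Fin N // ¬ (x : ℕ) < Q} :=
      { toFun := fun p => ⟨p.1.2, by
          intro hlt
          have := p.2.2
          rw [dif_pos hlt] at this
          exact hy ⟨_, this⟩⟩
        invFun := fun x => ⟨(y, x.1), by
          constructor
          · exact hy
          · rw [dif_neg x.2]⟩
        left_inv := fun p => by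
          obtain ⟨⟨z, x⟩, hz, hx⟩ := p
          apply Subtype.ext
          simp only [Prod.mk.injEq]
          refine ⟨?_, trivial⟩
          by_cases hlt : (x : ℕ) < Q
          · rw [dif_pos hlt] at hx
            exact absurd ⟨_, hx⟩ hy
          · rw [dif_neg hlt] at hx
            exact hx.symm
        right_inv := fun x => rfl }
    rw [Fintype.card_congr e]
    have h1 : Fintype.card {x : Fin N // (x : ℕ) < Q} = Q := by
      rw [Fintype.card_congr
        (⟨fun x => ⟨(x.1 : ℕ), x.2⟩, fun i => ⟨⟨(i : ℕ), lt_of_lt_of_le i.isLt hQ⟩, i.isLt⟩,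
          fun x => by ext; rfl, fun i => by ext; rfl⟩ : {x : Fin N // (x : ℕ) < Q} ≃ Fin Q)]
      exact Fintype.card_fin Q
    rw [Fintype.card_subtype_compl, h1, Fintype.card_fin]

lemma card_TFib (N : ℕ) : ∀ Q : ℕ, Q ≤ N → ∀ h : Fin Q → Fin N,
    Fintype.card (TFib N Q h) = Nat.descFactorial N Q := by
  intro Q
  induction Q with
  | zero =>
    intro _ h
    rw [Nat.descFactorial_zero, Fintype.card_eq_one_iff]
    refine ⟨⟨(fun i => i.elim0, fun i => i.elim0), fun a => a.elim0, fun ℓ => ℓ.elim0⟩, ?_⟩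
    rintro ⟨⟨s, f⟩, -⟩
    apply Subtype.ext
    apply Prod.ext <;> exact funext fun i => i.elim0
  | succ Q ih =>
    intro hQ h
    have hQ' : Q ≤ N := Nat.le_of_succ_le hQ
    rw [Fintype.card_congr (tfibEquiv N Q h), Fintype.card_sigma]
    have hfix : ∀ q : TFib N Q (h ∘ Fin.castSucc),
        Fintype.card (EFib N Q q.1.1 (h (Fin.last Q))) = N - Q :=
      fun q => card_EFib hQ' q.1.1 q.2.1 _
    rw [Finset.sum_congr rfl (fun q _ => hfix q), Finset.sum_const, Finset.card_univ,
      ih hQ' (h ∘ Fin.castSucc), smul_eq_mul, Nat.descFactorial_succ, Nat.mul_comm]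

lemma exists_perm_extend {N Q : ℕ} (hQ : Q ≤ N) (s : Fin Q → Fin N)
    (hinj : Function.Injective s) :
    ∃ σ₀ : Equiv.Perm (Fin N), ∀ i : Fin Q, σ₀ (Fin.castLE hQ i) = s i := by
  set f : Fin N → Fin N := fun x => if h : (x : ℕ) < Q then s ⟨(x : ℕ), h⟩ else x with hf
  have hfst : Finset.image f (Finset.univ.filter (fun x : Fin N => (x : ℕ) < Q)) ⊆
      Finset.univ := Finset.subset_univ _
  have hfs : Set.InjOn f (Finset.univ.filter (fun x : Fin N => (x : ℕ) < Q)) := by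
    intro a ha b hb hab
    simp only [Finset.coe_filter, Set.mem_setOf_eq] at ha hb
    rw [hf] at hab
    simp only [dif_pos ha.2, dif_pos hb.2] at hab
    have h2 := hinj hab
    have h3 := congrArg Fin.val h2
    exact Fin.ext h3
  obtain ⟨g, hg⟩ := Finset.exists_equiv_extend_of_card_eq
    (by simp : Fintype.card (Fin N) = Finset.univ.card) hfst hfs
  refine ⟨g.trans (Equiv.subtypeUnivEquiv (fun x => Finset.mem_univ x)), fun i => ?_⟩
  have hmem : Fin.castLE hQ i ∈ Finset.univ.filter (fun x : Fin N => (x : ℕ) < Q) := by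
    simp [Fin.castLE, i.isLt]
  have h2 : (g (Fin.castLE hQ i) : Fin N) = f (Fin.castLE hQ i) := hg _ hmem
  have h3 : f (Fin.castLE hQ i) = s i := by
    rw [hf]
    simp only []
    rw [dif_pos (show ((Fin.castLE hQ i : Fin N) : ℕ) < Q from i.isLt)]
    exact congrArg s (Fin.ext rfl)
  rw [Equiv.trans_apply]
  exact h2.trans h3

/-- The set of permutations extending a fixed injection. -/
def Ext (N Q : ℕ) (hQ : Q ≤ N) (s : Fin Q → Fin N) : Type :=
  {σ : Equiv.Perm (Fin N) // ∀ i : Fin Q, σ (Fin.castLE hQ i) = s i}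

noncomputable instance (N Q : ℕ) (hQ : Q ≤ N) (s : Fin Q → Fin N) :
    Fintype (Ext N Q hQ s) := by
  unfold Ext; infer_instance

lemma card_Ext {N Q : ℕ} (hQ : Q ≤ N) (s : Fin Q → Fin N)
    (hinj : Function.Injective s) :
    Fintype.card (Ext N Q hQ s) = Fintype.card (Ext N Q hQ (Fin.castLE hQ)) := by
  obtain ⟨σ₀, hσ₀⟩ := exists_perm_extend hQ s hinj
  refine Fintype.card_congr
    { toFun := fun σ => ⟨σ₀⁻¹ * σ.1, fun i => by
        simp only [Equiv.Perm.mul_apply, σ.2 i, ← hσ₀ i, Equiv.Perm.inv_def, Equiv.symm_apply_apply]⟩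
      invFun := fun σ => ⟨σ₀ * σ.1, fun i => by
        simp only [Equiv.Perm.mul_apply, σ.2 i]
        exact hσ₀ i⟩
      left_inv := fun σ => by
        apply Subtype.ext
        simp [mul_assoc]
      right_inv := fun σ => by
        apply Subtype.ext
        simp [← mul_assoc] }

lemma bridge {N Q : ℕ} (hQ : Q ≤ N) (σ : Equiv.Perm (Fin N)) (f : Fin Q → Fin N) (ℓ : Fin Q) :
    (if ((f ℓ : ℕ) < (ℓ : ℕ)) then σ (f ℓ) else σ (Fin.castLE hQ ℓ))
      = σ (Fin.castLE hQ (addr ℓ (f ℓ))) := by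
  unfold addr
  by_cases h : ((f ℓ : ℕ) < (ℓ : ℕ))
  · rw [if_pos h, dif_pos h]
    exact congrArg σ (Fin.ext rfl)
  · rw [if_neg h, dif_neg h]

def pfibEquiv (N Q : ℕ) (hQ : Q ≤ N) (h : Fin Q → Fin N) :
    {p : Equiv.Perm (Fin N) × (Fin Q → Fin N) //
      h = fun ℓ : Fin Q =>
        if ((p.2 ℓ : ℕ) < (ℓ : ℕ)) then p.1 (p.2 ℓ) else p.1 (Fin.castLE hQ ℓ)} ≃
    Σ q : TFib N Q h, Ext N Q hQ q.1.1 where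
  toFun p :=
    ⟨⟨(fun i => p.1.1 (Fin.castLE hQ i), p.1.2), by
        constructor
        · exact fun a b hab => Fin.castLE_injective hQ (p.1.1.injective hab)
        · intro ℓ
          show p.1.1 (Fin.castLE hQ (addr ℓ (p.1.2 ℓ))) = h ℓ
          rw [← bridge hQ p.1.1 p.1.2 ℓ]
          exact (congrFun p.2 ℓ).symm⟩,
      ⟨p.1.1, fun i => rfl⟩⟩
  invFun q :=
    ⟨(q.2.1, q.1.1.2), by
      funext ℓ
      rw [bridge hQ q.2.1 q.1.1.2 ℓ, q.2.2 (addr ℓ (q.1.1.2 ℓ))]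
      exact (q.1.2.2 ℓ).symm⟩
  left_inv p := Subtype.ext rfl
  right_inv q := by
    obtain ⟨⟨⟨s, f⟩, hs⟩, ⟨σ, hσ⟩⟩ := q
    apply Sigma.ext
    · apply Subtype.ext
      exact Prod.ext (funext fun i => hσ i) rfl
    · have hs' : (fun i => σ (Fin.castLE hQ i)) = s := funext hσ
      subst hs'
      rfl

end DataAllocAux

theorem data_allocation_iid (N Q : ℕ) (hN : 0 < N) (hQ : Q ≤ N) :
    haveI : Nonempty (Fin N) := Fin.pos_iff_nonempty.mp hN
    PMF.map (fun p : Equiv.Perm (Fin N) × (Fin Q → Fin N) =>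
        fun ℓ : Fin Q =>
          if ((p.2 ℓ : ℕ) < (ℓ : ℕ)) then p.1 (p.2 ℓ) else p.1 (Fin.castLE hQ ℓ))
      (PMF.uniformOfFintype (Equiv.Perm (Fin N) × (Fin Q → Fin N)))
    = PMF.uniformOfFintype (Fin Q → Fin N) := by
  haveI : Nonempty (Fin N) := Fin.pos_iff_nonempty.mp hN
  classical
  set G := (fun p : Equiv.Perm (Fin N) × (Fin Q → Fin N) =>
      fun ℓ : Fin Q =>
        if ((p.2 ℓ : ℕ) < (ℓ : ℕ)) then p.1 (p.2 ℓ) else p.1 (Fin.castLE hQ ℓ)) with hG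
  set u := PMF.uniformOfFintype (Equiv.Perm (Fin N) × (Fin Q → Fin N)) with hu
  set C : ENNReal := (Nat.descFactorial N Q *
      Fintype.card (DataAllocAux.Ext N Q hQ (Fin.castLE hQ)) : ℕ) *
      (Fintype.card (Equiv.Perm (Fin N) × (Fin Q → Fin N)) : ENNReal)⁻¹ with hC
  have hval : ∀ h : Fin Q → Fin N, (PMF.map G u) h = C := by
    intro h
    have hcard : (Finset.univ.filter (fun p => h = G p)).card
        = Nat.descFactorial N Q * Fintype.card (DataAllocAux.Ext N Q hQ (Fin.castLE hQ)) := by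
      rw [← Fintype.card_subtype]
      rw [Fintype.card_congr (DataAllocAux.pfibEquiv N Q hQ h), Fintype.card_sigma]
      have hfix : ∀ q : DataAllocAux.TFib N Q h,
          Fintype.card (DataAllocAux.Ext N Q hQ q.1.1)
            = Fintype.card (DataAllocAux.Ext N Q hQ (Fin.castLE hQ)) :=
        fun q => DataAllocAux.card_Ext hQ q.1.1 q.2.1
      rw [Finset.sum_congr rfl (fun q _ => hfix q), Finset.sum_const, Finset.card_univ,
        DataAllocAux.card_TFib N Q hQ h, smul_eq_mul]
    calc (PMF.map G u) h
        = ∑ b : Equiv.Perm (Fin N) × (Fin Q → Fin N), if h = G b then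
            ((Fintype.card (Equiv.Perm (Fin N) × (Fin Q → Fin N)) : ENNReal))⁻¹ else 0 := by
          rw [PMF.map_apply, tsum_fintype]
          apply Finset.sum_congr rfl
          intro p _
          by_cases hp : h = G p <;> simp [hp, hu, PMF.uniformOfFintype_apply]
      _ = ∑ _b ∈ Finset.univ.filter (fun p => h = G p),
            ((Fintype.card (Equiv.Perm (Fin N) × (Fin Q → Fin N)) : ENNReal))⁻¹ :=
          (Finset.sum_filter _ _).symm
      _ = (Finset.univ.filter (fun p => h = G p)).card •
            ((Fintype.card (Equiv.Perm (Fin N) × (Fin Q → Fin N)) : ENNReal))⁻¹ :=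
          Finset.sum_const _
      _ = C := by rw [hcard, hC, nsmul_eq_mul]
  have hsum : ∑' h : Fin Q → Fin N, (PMF.map G u) h = 1 := (PMF.map G u).tsum_coe
  rw [tsum_fintype, Finset.sum_congr rfl (fun h _ => hval h), Finset.sum_const,
    Finset.card_univ, nsmul_eq_mul] at hsum
  have hk0 : (Fintype.card (Fin Q → Fin N) : ENNReal) ≠ 0 :=
    Nat.cast_ne_zero.mpr Fintype.card_ne_zero
  have hktop : (Fintype.card (Fin Q → Fin N) : ENNReal) ≠ ⊤ := ENNReal.natCast_ne_top _
  have hCval : C = (Fintype.card (Fin Q → Fin N) : ENNReal)⁻¹ := by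
    calc C = 1 * C := (one_mul C).symm
    _ = ((Fintype.card (Fin Q → Fin N) : ENNReal)⁻¹ *
          (Fintype.card (Fin Q → Fin N) : ENNReal)) * C := by
        rw [ENNReal.inv_mul_cancel hk0 hktop]
    _ = (Fintype.card (Fin Q → Fin N) : ENNReal)⁻¹ *
          ((Fintype.card (Fin Q → Fin N) : ENNReal) * C) := by rw [mul_assoc]
    _ = (Fintype.card (Fin Q → Fin N) : ENNReal)⁻¹ := by rw [hsum, mul_one]
  ext h
  rw [hval h, hCval, PMF.uniformOfFintype_apply]
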